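/- The ideal $I = (\prod_{i=1}^d (x_0 - i x_n), \ldots, \prod_{i=1}^d (x_{n-1} - i x_n))$ in $\mathbb{C}[x_0,\ldots,x_n]$ defines a zero-dimensional subscheme of $\mathbb{P}^n$ whose support is exactly the set of $d^n$ distinct points $\{(a_0 : \cdots : a_{n-1} : 1) : a_i \in \{1,\ldots,d\}\}$, and this subscheme is reduced. -/

import Mathlib

open MvPolynomial

theorem finSuccEquiv_rename_succ (n : ℕ) (q : MvPolynomial (Fin n) ℂ) :
    finSuccEquiv ℂ n (rename Fin.succ q) = Polynomial.C q := by
  induction q using MvPolynomial.induction_on with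
  | C a => simp [finSuccEquiv_apply]
  | add p q hp hq => simp [hp, hq]
  | mul_X p i hp => simp [hp, finSuccEquiv_X_succ]

theorem degreeOf_sum_le' {σ ι : Type*} (k : σ) (s : Finset ι) (F : ι → MvPolynomial σ ℂ) (a : ℕ)
    (h : ∀ i ∈ s, degreeOf k (F i) ≤ a) : degreeOf k (∑ i ∈ s, F i) ≤ a := by
  classical
  induction s using Finset.induction_on with
  | empty => simp
  | insert x s' hx ih =>
    rw [Finset.sum_insert hx]
    exact le_trans (degreeOf_add_le _ _ _)
      (max_le (h _ (Finset.mem_insert_self _ _)) (ih fun i hi => h i (Finset.mem_insert_of_mem hi)))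

theorem degreeOf_symm_le (n : ℕ) (R : Polynomial (MvPolynomial (Fin n) ℂ)) (m : Fin n) (a : ℕ)
    (h : ∀ j, degreeOf m (R.coeff j) ≤ a) :
    degreeOf m.succ ((finSuccEquiv ℂ n).symm R) ≤ a := by
  have hR : (finSuccEquiv ℂ n).symm R
      = ∑ j ∈ R.support, rename Fin.succ (R.coeff j) * X 0 ^ j := by
    apply (finSuccEquiv ℂ n).injective
    rw [AlgEquiv.apply_symm_apply, map_sum]
    conv_lhs => rw [R.as_sum_support]
    refine Finset.sum_congr rfl fun j _ => ?_
    rw [← Polynomial.C_mul_X_pow_eq_monomial, map_mul, map_pow, finSuccEquiv_rename_succ,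
      finSuccEquiv_X_zero]
  rw [hR]
  apply degreeOf_sum_le'
  intro j _
  refine le_trans (degreeOf_mul_le _ _ _) ?_
  have h1 : degreeOf m.succ (rename (Fin.succ) (R.coeff j)) = degreeOf m (R.coeff j) :=
    degreeOf_rename_of_injective (Fin.succ_injective n) m
  have h2 : degreeOf m.succ ((X 0 : MvPolynomial (Fin (n+1)) ℂ) ^ j) = 0 := by
    refine Nat.le_zero.mp (le_trans (degreeOf_pow_le _ _ _) ?_)
    rw [degreeOf_X, if_neg (Fin.succ_ne_zero m)]
    simp
  rw [h1, h2, add_zero]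
  exact h j

theorem degreeOf_sub_le' {σ : Type*} (k : σ) (p q : MvPolynomial σ ℂ) :
    degreeOf k (p - q) ≤ max (degreeOf k p) (degreeOf k q) := by
  have hneg : degreeOf k (-q) ≤ degreeOf k q := by
    have := MvPolynomial.degreeOf_C_mul_le q k (-1 : ℂ)
    simpa using this
  rw [sub_eq_add_neg]
  exact le_trans (degreeOf_add_le _ _ _) (max_le_max le_rfl hneg)
theorem div_bound {σ : Type*} (cond : σ → Prop) (a : σ → ℕ)
    (F : Polynomial (MvPolynomial σ ℂ)) (hF : F.Monic)
    (hFc : ∀ m, cond m → ∀ j, degreeOf m (F.coeff j) = 0) :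
    ∀ (N : ℕ) (P : Polynomial (MvPolynomial σ ℂ)), P.natDegree ≤ N →
      (∀ m, cond m → ∀ j, degreeOf m (P.coeff j) ≤ a m) →
      ∃ Q R, P = Q * F + R ∧ R.degree < F.degree ∧
        ∀ m, cond m → ∀ j, degreeOf m (R.coeff j) ≤ a m := by
  have step : ∀ (P : Polynomial (MvPolynomial σ ℂ)),
      (∀ P' : Polynomial (MvPolynomial σ ℂ), P'.natDegree < P.natDegree →
        (∀ m, cond m → ∀ j, degreeOf m (P'.coeff j) ≤ a m) →
        ∃ Q R, P' = Q * F + R ∧ R.degree < F.degree ∧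
          ∀ m, cond m → ∀ j, degreeOf m (R.coeff j) ≤ a m) →
      (∀ m, cond m → ∀ j, degreeOf m (P.coeff j) ≤ a m) →
      ∃ Q R, P = Q * F + R ∧ R.degree < F.degree ∧
        ∀ m, cond m → ∀ j, degreeOf m (R.coeff j) ≤ a m := by
    intro P ih hP
    by_cases hlt : P.degree < F.degree
    · exact ⟨0, P, by ring, hlt, hP⟩
    have hFle : F.degree ≤ P.degree := not_lt.mp hlt
    have hFne : F ≠ 0 := hF.ne_zero
    have hPne : P ≠ 0 := by
      rintro rfl
      rw [Polynomial.degree_zero, le_bot_iff, Polynomial.degree_eq_bot] at hFle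
      exact hFne hFle
    set lc := P.leadingCoeff with hlc
    have hlcne : lc ≠ 0 := by simpa [hlc] using hPne
    set k : ℕ := P.natDegree - F.natDegree with hk
    set c : Polynomial (MvPolynomial σ ℂ) := Polynomial.monomial k lc with hc
    have hcne : c ≠ 0 := by
      simp only [hc, ne_eq, Polynomial.monomial_eq_zero_iff]
      exact hlcne
    have hnatle : F.natDegree ≤ P.natDegree := Polynomial.natDegree_le_natDegree hFle
    have hdegc : (c * F).degree = P.degree := by
      rw [Polynomial.degree_mul, hc, Polynomial.degree_monomial _ hlcne,
        Polynomial.degree_eq_natDegree hFne, Polynomial.degree_eq_natDegree hPne]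
      rw [← Nat.cast_add, hk]
      congr 1
      omega
    have hlcc : (c * F).leadingCoeff = lc := by
      rw [Polynomial.leadingCoeff_mul, hc, Polynomial.leadingCoeff_monomial, hF.leadingCoeff,
        mul_one]
    -- coefficient bounds for c * F
    have hcF : ∀ m, cond m → ∀ j, degreeOf m ((c * F).coeff j) ≤ a m := by
      intro m hm j
      have hrw : c * F = Polynomial.C lc * (F * Polynomial.X ^ k) := by
        rw [hc, ← Polynomial.C_mul_X_pow_eq_monomial]; ring
      rw [hrw, Polynomial.coeff_C_mul, Polynomial.coeff_mul_X_pow']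
      by_cases hkj : k ≤ j
      · rw [if_pos hkj]
        refine le_trans (degreeOf_mul_le _ _ _) ?_
        rw [hFc m hm (j - k), add_zero]
        exact hP m hm P.natDegree
      · rw [if_neg hkj, mul_zero, degreeOf_zero]
        exact Nat.zero_le _
    set P' : Polynomial (MvPolynomial σ ℂ) := P - c * F with hP'
    have hP'b : ∀ m, cond m → ∀ j, degreeOf m (P'.coeff j) ≤ a m := by
      intro m hm j
      rw [hP', Polynomial.coeff_sub]
      exact le_trans (degreeOf_sub_le' _ _ _) (max_le (hP m hm j) (hcF m hm j))
    by_cases hP'0 : P' = 0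
    · refine ⟨c, 0, ?_, ?_, ?_⟩
      · have : P - c * F = 0 := hP'0
        rw [add_zero]; linear_combination this
      · rw [Polynomial.degree_zero]
        exact Ne.bot_lt (fun hb => hFne (Polynomial.degree_eq_bot.mp hb))
      · intro m hm j; simp
    · have hdlt : P'.degree < P.degree := by
        rw [hP']
        exact Polynomial.degree_sub_lt hdegc.symm hPne (by rw [hlcc])
      have hnlt : P'.natDegree < P.natDegree := Polynomial.natDegree_lt_natDegree hP'0 hdlt
      obtain ⟨Q, R, hQR, hRdeg, hRb⟩ := ih P' hnlt hP'b
      refine ⟨Q + c, R, ?_, hRdeg, hRb⟩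
      have : P - c * F = Q * F + R := hQR
      linear_combination this
  intro N
  induction N with
  | zero =>
    intro P hPN hP
    exact step P (fun P' h' _ => absurd (lt_of_lt_of_le h' hPN) (Nat.not_lt_zero _)) hP
  | succ N ih =>
    intro P hPN hP
    exact step P (fun P' h' hb => ih P' (by omega) hb) hP
noncomputable def gens (n d : ℕ) : Fin n → MvPolynomial (Fin (n+1)) ℂ := fun i =>
  ∏ j ∈ Finset.range d,
    ((X i.castSucc : MvPolynomial (Fin (n + 1)) ℂ) - C ((j : ℂ) + 1) * X (Fin.last n))

theorem gens_image (n d : ℕ) (hn : 1 ≤ n) (i : Fin n) :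
    finSuccEquiv ℂ n (rename (Equiv.swap (0 : Fin (n+1)) i.castSucc) (gens n d i)) =
      ∏ j ∈ Finset.range d,
        (Polynomial.X - Polynomial.C (C ((j : ℂ) + 1) * X (⟨n-1, by omega⟩ : Fin n))) := by
  have hlast : Fin.last n = Fin.succ ⟨n-1, by omega⟩ := by
    apply Fin.ext; simp [Fin.val_succ]; omega
  unfold gens
  rw [map_prod, map_prod]
  refine Finset.prod_congr rfl fun j _ => ?_
  rw [map_sub, map_mul, rename_X, rename_C, rename_X, Equiv.swap_apply_right,
    Equiv.swap_apply_of_ne_of_ne (by simp [Fin.ext_iff]; omega) (Fin.castSucc_lt_last i).ne',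
    map_sub, map_mul, finSuccEquiv_X_zero, hlast, finSuccEquiv_X_succ]
  congr 1
  · rw [show (finSuccEquiv ℂ n) (C ((j:ℂ)+1)) = Polynomial.C (C ((j:ℂ)+1)) by
      simp [finSuccEquiv_apply]]
    rw [← map_mul]

theorem reduce_var (n d : ℕ) (hn : 1 ≤ n) (hd : 1 ≤ d) (i : Fin n)
    (g : MvPolynomial (Fin (n+1)) ℂ) :
    ∃ r, g - r ∈ Ideal.span (Set.range (gens n d)) ∧ degreeOf i.castSucc r < d ∧
      ∀ k : Fin n, k ≠ i → degreeOf k.castSucc r ≤ degreeOf k.castSucc g := by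
  classical
  set σp := Equiv.swap (0 : Fin (n+1)) i.castSucc with hσp
  set lastv : Fin n := ⟨n-1, by omega⟩ with hlastv
  have hlast : Fin.last n = Fin.succ lastv := by
    apply Fin.ext; simp [Fin.val_succ, hlastv]; omega
  have hid : (⇑σp ∘ ⇑σp) = id := funext fun x => Equiv.swap_apply_self _ _ x
  have hinv : ∀ p : MvPolynomial (Fin (n+1)) ℂ, rename (⇑σp) (rename (⇑σp) p) = p := by
    intro p
    rw [rename_rename, hid, rename_id, AlgHom.id_apply]
  set F := finSuccEquiv ℂ n (rename (⇑σp) (gens n d i)) with hFdef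
  have hF : F = ∏ j ∈ Finset.range d,
      (Polynomial.X - Polynomial.C (C ((j : ℂ) + 1) * X lastv)) := gens_image n d hn i
  have hFm : F.Monic := by
    rw [hF]; exact Polynomial.monic_prod_of_monic _ _ fun j _ => Polynomial.monic_X_sub_C _
  have hFd : F.natDegree = d := by
    rw [hF, Polynomial.natDegree_prod_of_monic _ _ fun j _ => Polynomial.monic_X_sub_C _]
    simp only [Polynomial.natDegree_X_sub_C, Finset.sum_const, smul_eq_mul, mul_one,
      Finset.card_range]
  have hFc : ∀ m : Fin n, m ≠ lastv → ∀ j, degreeOf m (F.coeff j) = 0 := by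
    intro m hm
    rw [hF]
    refine Finset.prod_induction _ (fun P : Polynomial (MvPolynomial (Fin n) ℂ) => ∀ j, degreeOf m (P.coeff j) = 0) ?_ ?_ ?_
    · intro P Q hP hQ j
      rw [Polynomial.coeff_mul]
      refine Nat.le_zero.mp (degreeOf_sum_le' _ _ _ 0 fun x _ => ?_)
      refine le_trans (degreeOf_mul_le _ _ _) ?_
      rw [hP, hQ]
    · intro j
      rw [Polynomial.coeff_one]
      split
      · rw [← C_1]; exact degreeOf_C _ _
      · exact degreeOf_zero _
    · intro j _ l
      rw [Polynomial.coeff_sub]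
      refine Nat.le_zero.mp (le_trans (degreeOf_sub_le' _ _ _) ?_)
      have h1 : degreeOf m ((Polynomial.X : Polynomial (MvPolynomial (Fin n) ℂ)).coeff l) = 0 := by
        rw [Polynomial.coeff_X]
        split
        · rw [← C_1]; exact degreeOf_C _ _
        · exact degreeOf_zero _
      have h2 : degreeOf m ((Polynomial.C (C ((j : ℂ) + 1) * X lastv)).coeff l) = 0 := by
        rw [Polynomial.coeff_C]
        split
        · refine Nat.le_zero.mp (le_trans (degreeOf_C_mul_le _ _ _) ?_)
          rw [degreeOf_X, if_neg hm]
        · simp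
      rw [h1, h2]
      simp
  set G := finSuccEquiv ℂ n (rename (⇑σp) g) with hGdef
  have hσσ : ∀ x : Fin (n+1), σp (σp x) = x := fun x => Equiv.swap_apply_self _ _ x
  have hG : ∀ m : Fin n, m ≠ lastv → ∀ j,
      degreeOf m (G.coeff j) ≤ degreeOf (σp m.succ) g := by
    intro m _ j
    refine le_trans (degreeOf_coeff_finSuccEquiv _ _ _) (le_of_eq ?_)
    have := degreeOf_rename_of_injective (p := g) (f := ⇑σp) σp.injective (σp m.succ)
    rw [hσσ] at this
    exact this
  obtain ⟨Q, R, hQR, hRdeg, hRb⟩ := div_bound (fun m => m ≠ lastv)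
    (fun m => degreeOf (σp m.succ) g) F hFm hFc G.natDegree G le_rfl hG
  refine ⟨rename (⇑σp) ((finSuccEquiv ℂ n).symm R), ?_, ?_, ?_⟩
  · have hg : g = rename (⇑σp) ((finSuccEquiv ℂ n).symm G) := by
      rw [hGdef, AlgEquiv.symm_apply_apply, hinv]
    rw [hg, hQR, map_add, map_add, map_mul]
    have : (finSuccEquiv ℂ n).symm F = rename (⇑σp) (gens n d i) := by
      rw [hFdef, AlgEquiv.symm_apply_apply]
    rw [this, add_sub_cancel_right, map_mul, hinv]
    exact Ideal.mul_mem_left _ _ (Ideal.subset_span ⟨i, rfl⟩)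
  · have h0 : degreeOf i.castSucc (rename (⇑σp) ((finSuccEquiv ℂ n).symm R))
        = degreeOf 0 ((finSuccEquiv ℂ n).symm R) := by
      have := degreeOf_rename_of_injective (p := (finSuccEquiv ℂ n).symm R) (f := ⇑σp)
        σp.injective 0
      rw [show σp 0 = i.castSucc from Equiv.swap_apply_left _ _] at this
      exact this
    rw [h0, ← natDegree_finSuccEquiv, AlgEquiv.apply_symm_apply]
    rcases eq_or_ne R 0 with h | h
    · simpa [h] using (show 0 < d by omega)
    · have := Polynomial.natDegree_lt_natDegree h hRdeg
      omega
  · intro k hk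
    have hone : degreeOf k.castSucc (rename (⇑σp) ((finSuccEquiv ℂ n).symm R))
        = degreeOf (σp k.castSucc) ((finSuccEquiv ℂ n).symm R) := by
      have := degreeOf_rename_of_injective (p := (finSuccEquiv ℂ n).symm R) (f := ⇑σp)
        σp.injective (σp k.castSucc)
      rw [hσσ] at this
      exact this
    set x := σp k.castSucc with hx
    have hxcase : x = k.castSucc ∨ x = i.castSucc := by
      rcases eq_or_ne k.castSucc (0 : Fin (n+1)) with h0 | h0
      · right; rw [hx, h0]; exact Equiv.swap_apply_left _ _
      · left; rw [hx]
        exact Equiv.swap_apply_of_ne_of_ne h0 (by rwa [ne_eq, Fin.castSucc_inj])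
    have hx0 : x ≠ 0 := by
      rw [hx]
      intro h
      apply hk
      have := σp.injective (h.trans (Equiv.swap_apply_right _ _).symm)
      rwa [Fin.castSucc_inj] at this
    have hxlast : x ≠ Fin.last n := by
      rcases hxcase with h | h <;> rw [h] <;> exact (Fin.castSucc_lt_last _).ne
    set m : Fin n := x.pred hx0 with hm
    have hmsucc : m.succ = x := Fin.succ_pred _ _
    have hmne : m ≠ lastv := by
      intro h
      apply hxlast
      rw [← hmsucc, h, ← hlast]
    have hstep : degreeOf x ((finSuccEquiv ℂ n).symm R) ≤ degreeOf (σp x) g := by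
      rw [← hmsucc]
      exact degreeOf_symm_le n R m _ (fun j => hRb m hmne j)
    rw [hone]
    refine le_trans hstep (le_of_eq ?_)
    rw [hx, hσσ]

theorem normal_form (n d : ℕ) (hn : 1 ≤ n) (hd : 1 ≤ d)
    (g : MvPolynomial (Fin (n+1)) ℂ) :
    ∃ r, g - r ∈ Ideal.span (Set.range (gens n d)) ∧
      ∀ i : Fin n, degreeOf i.castSucc r < d := by
  have claim : ∀ k : ℕ, ∃ r, g - r ∈ Ideal.span (Set.range (gens n d)) ∧
      ∀ i : Fin n, (i : ℕ) < k → degreeOf i.castSucc r < d := by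
    intro k
    induction k with
    | zero => exact ⟨g, by simp, fun i hi => absurd hi (Nat.not_lt_zero _)⟩
    | succ k ih =>
      obtain ⟨r, hr, hdeg⟩ := ih
      by_cases hk : k < n
      · obtain ⟨r', h1, h2, h3⟩ := reduce_var n d hn hd ⟨k, hk⟩ r
        refine ⟨r', ?_, ?_⟩
        · have : g - r' = (g - r) + (r - r') := by ring
          rw [this]
          exact Ideal.add_mem _ hr h1
        · intro i hi
          rcases eq_or_ne i (⟨k, hk⟩ : Fin n) with rfl | hne
          · exact h2
          · refine lt_of_le_of_lt (h3 i hne) (hdeg i ?_)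
            have : (i : ℕ) ≠ k := fun h => hne (Fin.ext h)
            omega
      · exact ⟨r, hr, fun i hi => hdeg i (by have := i.isLt; omega)⟩
  obtain ⟨r, hr, hdeg⟩ := claim n
  exact ⟨r, hr, fun i => hdeg i i.isLt⟩

theorem grid_vanish : ∀ (N : ℕ) (p : MvPolynomial (Fin N) ℂ) (S : Fin N → Finset ℂ),
    (∀ i, degreeOf i p < (S i).card) →
    (∀ v : Fin N → ℂ, (∀ i, v i ∈ S i) → eval v p = 0) → p = 0 := by
  intro N
  induction N with
  | zero =>
    intro p S _ hv
    rw [p.eq_C_of_isEmpty]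
    have := hv (fun i => i.elim0) (fun i => i.elim0)
    rw [p.eq_C_of_isEmpty, eval_C] at this
    rw [this, map_zero]
  | succ N ih =>
    intro p S hdeg hv
    have hP : ∀ j, (finSuccEquiv ℂ N p).coeff j = 0 := by
      intro j
      refine ih _ (fun m => S m.succ) (fun m => lt_of_le_of_lt
        (degreeOf_coeff_finSuccEquiv p m j) (hdeg m.succ)) ?_
      intro v hvmem
      have hW : Polynomial.map (eval v) (finSuccEquiv ℂ N p) = 0 := by
        refine Polynomial.eq_zero_of_natDegree_lt_card_of_eval_eq_zero' _ (S 0) ?_ ?_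
        · intro x hx
          rw [← eval_eq_eval_mv_eval']
          refine hv _ ?_
          intro i
          refine Fin.cases ?_ ?_ i
          · simpa using hx
          · intro m; simpa using hvmem m
        · refine lt_of_le_of_lt Polynomial.natDegree_map_le ?_
          rw [natDegree_finSuccEquiv]
          exact hdeg 0
      have := congrArg (fun q => Polynomial.coeff q j) hW
      simpa [Polynomial.coeff_map] using this
    have : finSuccEquiv ℂ N p = 0 := Polynomial.ext fun j => by simp [hP j]
    have h2 := congrArg (finSuccEquiv ℂ N).symm this
    simpa using h2

noncomputable def subst (n : ℕ) (u : Fin n → ℂ) :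
    MvPolynomial (Fin (n+1)) ℂ →ₐ[ℂ] Polynomial ℂ :=
  aeval (Fin.snoc (fun i => Polynomial.C (u i) * Polynomial.X) Polynomial.X)

theorem subst_gens (n d : ℕ) (σ : Fin n → Fin d) (i : Fin n) :
    subst n (fun k => ((σ k : ℕ) : ℂ) + 1) (gens n d i) = 0 := by
  unfold subst gens
  rw [map_prod]
  refine Finset.prod_eq_zero (Finset.mem_range.mpr (σ i).isLt) ?_
  rw [map_sub, map_mul, aeval_X, aeval_X, aeval_C, Fin.snoc_castSucc, Fin.snoc_last]
  simp [Polynomial.algebraMap_eq]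

theorem subst_span_zero (n d : ℕ) (σ : Fin n → Fin d) (p : MvPolynomial (Fin (n+1)) ℂ)
    (hp : p ∈ Ideal.span (Set.range (gens n d))) :
    subst n (fun k => ((σ k : ℕ) : ℂ) + 1) p = 0 := by
  have hle : Ideal.span (Set.range (gens n d)) ≤
      RingHom.ker (subst n (fun k => ((σ k : ℕ) : ℂ) + 1)).toRingHom := by
    rw [Ideal.span_le]
    rintro q ⟨i, rfl⟩
    exact subst_gens n d σ i
  exact hle hp

theorem eval_of_subst (n d : ℕ) (r : MvPolynomial (Fin (n+1)) ℂ)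
    (hr : ∀ σ : Fin n → Fin d, subst n (fun k => ((σ k : ℕ) : ℂ) + 1) r = 0)
    (s : ℂ) (w : Fin (n+1) → ℂ) (hws : w (Fin.last n) = s)
    (hw : ∀ k : Fin n, ∃ j : ℕ, j < d ∧ w k.castSucc = ((j : ℂ) + 1) * s) :
    eval w r = 0 := by
  have hσ : ∀ k, Classical.choose (hw k) < d := fun k => (Classical.choose_spec (hw k)).1
  set σ : Fin n → Fin d := fun k => ⟨Classical.choose (hw k), hσ k⟩ with hσdef
  have hcomp : (Polynomial.evalRingHom s).comp
      (subst n (fun k => ((σ k : ℕ) : ℂ) + 1)).toRingHom = (eval w : MvPolynomial (Fin (n+1)) ℂ →+* ℂ) := by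
    apply MvPolynomial.ringHom_ext
    · intro a
      simp [subst, Polynomial.algebraMap_eq]
    · intro k
      refine Fin.lastCases ?_ ?_ k
      · simp [subst, hws]
      · intro m
        have hm := (Classical.choose_spec (hw m)).2
        simp only [RingHom.comp_apply, AlgHom.toRingHom_eq_coe, RingHom.coe_coe,
          subst, aeval_X, Fin.snoc_castSucc, eval_X, map_mul,
          Polynomial.coe_evalRingHom, Polynomial.eval_mul, Polynomial.eval_C,
          Polynomial.eval_X]
        exact hm.symm
  have h2 := DFunLike.congr_fun hcomp r
  simp only [RingHom.comp_apply, AlgHom.toRingHom_eq_coe, RingHom.coe_coe] at h2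
  rw [← h2, hr σ, map_zero]

theorem reduced_zero (n d : ℕ) (hn : 1 ≤ n) (hd : 1 ≤ d) (r : MvPolynomial (Fin (n+1)) ℂ)
    (hrdeg : ∀ i : Fin n, degreeOf i.castSucc r < d)
    (hr : ∀ σ : Fin n → Fin d, subst n (fun k => ((σ k : ℕ) : ℂ) + 1) r = 0) : r = 0 := by
  classical
  set ρ := Equiv.swap (0 : Fin (n+1)) (Fin.last n) with hρ
  set lastv : Fin n := ⟨n-1, by omega⟩ with hlastv
  have hlast : Fin.last n = Fin.succ lastv := by
    apply Fin.ext; simp [Fin.val_succ, hlastv]; omega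
  have hρρ : ∀ x : Fin (n+1), ρ (ρ x) = x := fun x => Equiv.swap_apply_self _ _ x
  set P := finSuccEquiv ℂ n (rename (⇑ρ) r) with hP
  have hPdeg : ∀ (m : Fin n) (j : ℕ), degreeOf m (P.coeff j) < d := by
    intro m j
    refine lt_of_le_of_lt (degreeOf_coeff_finSuccEquiv _ _ _) ?_
    have h1 := degreeOf_rename_of_injective (p := r) (f := ⇑ρ) ρ.injective (ρ m.succ)
    rw [hρρ] at h1
    rw [h1]
    rcases eq_or_ne m.succ (Fin.last n) with he | hne
    · rw [he, show ρ (Fin.last n) = 0 from Equiv.swap_apply_right _ _,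
        show (0 : Fin (n+1)) = Fin.castSucc (⟨0, by omega⟩ : Fin n) from
          by apply Fin.ext; simp]
      exact hrdeg ⟨0, by omega⟩
    · rw [Equiv.swap_apply_of_ne_of_ne (Fin.succ_ne_zero m) hne]
      obtain ⟨k, hk⟩ := Fin.eq_castSucc_of_ne_last hne
      rw [← hk]
      exact hrdeg k
  have hs : ∀ s : ℂ, s ≠ 0 → Polynomial.eval (MvPolynomial.C s) P = 0 := by
    intro s hs0
    set S : Finset ℂ := Finset.image (fun j : ℕ => ((j : ℂ) + 1) * s) (Finset.range d) with hS
    have hinj : Function.Injective (fun j : ℕ => ((j : ℂ) + 1) * s) := by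
      intro a b hab
      have h2 := mul_right_cancel₀ hs0 hab
      exact_mod_cast add_right_cancel h2
    have hScard : S.card = d := by
      rw [hS, Finset.card_image_of_injective _ hinj, Finset.card_range]
    have hmemS : ∀ x ∈ S, ∃ j : ℕ, j < d ∧ x = ((j : ℂ) + 1) * s := by
      intro x hx
      rw [hS, Finset.mem_image] at hx
      obtain ⟨j, hj, hjx⟩ := hx
      exact ⟨j, Finset.mem_range.mp hj, hjx.symm⟩
    apply grid_vanish n _ (fun _ => S)
    · intro i
      rw [hScard]
      rw [Polynomial.eval_eq_sum_range]
      have hb : degreeOf i (∑ j ∈ Finset.range (P.natDegree + 1),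
          P.coeff j * MvPolynomial.C s ^ j) ≤ d - 1 := by
        apply degreeOf_sum_le'
        intro j _
        refine le_trans (degreeOf_mul_le _ _ _) ?_
        rw [← map_pow, degreeOf_C, add_zero]
        have := hPdeg i j
        omega
      omega
    · intro v hv
      have e1 : (eval v) (Polynomial.eval (MvPolynomial.C s) P)
          = P.eval₂ (eval v) ((eval v) (MvPolynomial.C s)) := (Polynomial.eval₂_hom _ _).symm
      rw [MvPolynomial.eval_C, Polynomial.eval₂_eq_eval_map] at e1
      have e2 : Polynomial.eval s (P.map (eval v)) = eval (Fin.cons s v) (rename (⇑ρ) r) :=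
        (eval_eq_eval_mv_eval' v s (rename (⇑ρ) r)).symm
      have e3 : eval (Fin.cons s v) (rename (⇑ρ) r) = eval ((Fin.cons s v) ∘ ⇑ρ) r := by
        rw [eval_rename]
      have e4 : eval ((Fin.cons s v) ∘ ⇑ρ) r = 0 := by
        refine eval_of_subst n d r hr s ((Fin.cons s v) ∘ ⇑ρ) ?_ ?_
        · simp only [Function.comp_apply]
          rw [show ρ (Fin.last n) = 0 from Equiv.swap_apply_right _ _, Fin.cons_zero]
        · intro k
          simp only [Function.comp_apply]
          rcases eq_or_ne k.castSucc (0 : Fin (n+1)) with h0 | h0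
          · rw [h0, show ρ (0 : Fin (n+1)) = Fin.last n from Equiv.swap_apply_left _ _,
              hlast, Fin.cons_succ]
            exact hmemS _ (hv lastv)
          · rw [Equiv.swap_apply_of_ne_of_ne h0 (Fin.castSucc_lt_last k).ne]
            obtain ⟨m', hm'⟩ := Fin.exists_succ_eq.mpr h0
            rw [← hm', Fin.cons_succ]
            exact hmemS _ (hv m')
      have := e1.trans (e2.trans (e3.trans e4))
      convert this using 2
  have hP0 : P = 0 := by
    apply Polynomial.eq_zero_of_infinite_isRoot
    apply Set.Infinite.mono
      (s := (fun s : ℂ => (MvPolynomial.C s : MvPolynomial (Fin n) ℂ)) '' {s : ℂ | s ≠ 0})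
    · rintro x ⟨s, hs0, rfl⟩
      exact hs s hs0
    · refine Set.Infinite.image ?_ ?_
      · intro a _ b _ h
        exact C_injective _ _ h
      · have : ({0}ᶜ : Set ℂ).Infinite := (Set.finite_singleton 0).infinite_compl
        convert this using 1
        ext; simp
  have hren : rename (⇑ρ) r = 0 := by
    apply (finSuccEquiv ℂ n).injective
    rw [← hP, hP0, map_zero]
  exact rename_injective (⇑ρ) ρ.injective (by rw [hren, map_zero])

theorem key_mem (n d : ℕ) (hn : 1 ≤ n) (hd : 1 ≤ d) (g : MvPolynomial (Fin (n+1)) ℂ)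
    (hg : ∀ σ : Fin n → Fin d, subst n (fun k => ((σ k : ℕ) : ℂ) + 1) g = 0) :
    g ∈ Ideal.span (Set.range (gens n d)) := by
  obtain ⟨r, hgr, hrdeg⟩ := normal_form n d hn hd g
  have hr0 : ∀ σ : Fin n → Fin d, subst n (fun k => ((σ k : ℕ) : ℂ) + 1) r = 0 := by
    intro σ
    have h1 := subst_span_zero n d σ _ hgr
    have h2 := hg σ
    rw [map_sub] at h1
    rw [h2] at h1
    linear_combination -h1
  have : r = 0 := reduced_zero n d hn hd r hrdeg hr0
  rw [this, sub_zero] at hgr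
  exact hgr

theorem radical_part (n d : ℕ) (hn : 1 ≤ n) (hd : 1 ≤ d) :
    (Ideal.span (Set.range (gens n d))).IsRadical := by
  intro g hg
  obtain ⟨m, hm⟩ := hg
  apply key_mem n d hn hd
  intro σ
  have h1 : (subst n (fun k => ((σ k : ℕ) : ℂ) + 1) g) ^ (m + 1) = 0 := by
    rw [← map_pow]
    apply subst_span_zero n d σ
    rw [pow_succ]
    exact Ideal.mul_mem_right _ _ hm
  exact pow_eq_zero_iff (Nat.succ_ne_zero m) |>.mp h1

theorem set_part (n d : ℕ) (hn : 1 ≤ n) (hd : 1 ≤ d) :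
    {v : Fin (n + 1) → ℂ | v ≠ 0 ∧ ∀ f ∈ Ideal.span (Set.range (gens n d)), eval v f = 0} =
      {v : Fin (n + 1) → ℂ | ∃ (c : ℂ) (a : Fin n → ℂ), c ≠ 0 ∧
        (∀ i, ∃ j : ℕ, 1 ≤ j ∧ j ≤ d ∧ a i = j) ∧
        v = c • (Fin.snoc a 1 : Fin (n + 1) → ℂ)} := by
  ext v
  simp only [Set.mem_setOf_eq]
  constructor
  · rintro ⟨hv0, hv⟩
    have hgen : ∀ i : Fin n, ∃ j : ℕ, j < d ∧ v i.castSucc = ((j : ℂ) + 1) * v (Fin.last n) := by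
      intro i
      have h1 := hv (gens n d i) (Ideal.subset_span ⟨i, rfl⟩)
      unfold gens at h1
      rw [map_prod] at h1
      obtain ⟨j, hj, hj0⟩ := Finset.prod_eq_zero_iff.mp h1
      refine ⟨j, Finset.mem_range.mp hj, ?_⟩
      simp only [map_sub, map_mul, eval_X, eval_C] at hj0
      linear_combination hj0
    have hc : v (Fin.last n) ≠ 0 := by
      intro h0
      apply hv0
      funext k
      refine Fin.lastCases ?_ ?_ k
      · exact h0
      · intro i
        obtain ⟨j, hj, hij⟩ := hgen i
        show v i.castSucc = 0
        rw [hij, h0, mul_zero]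
    refine ⟨v (Fin.last n), fun i => v i.castSucc / v (Fin.last n), hc, ?_, ?_⟩
    · intro i
      obtain ⟨j, hj, hij⟩ := hgen i
      refine ⟨j + 1, by omega, by omega, ?_⟩
      show v i.castSucc / v (Fin.last n) = ((j + 1 : ℕ) : ℂ)
      rw [hij]
      push_cast
      field_simp
    · funext k
      refine Fin.lastCases ?_ ?_ k
      · rw [Pi.smul_apply, Fin.snoc_last, smul_eq_mul, mul_one]
      · intro i
        rw [Pi.smul_apply, Fin.snoc_castSucc, smul_eq_mul]
        show v i.castSucc = v (Fin.last n) * (v i.castSucc / v (Fin.last n))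
        field_simp
  · rintro ⟨c, a, hc, ha, rfl⟩
    constructor
    · intro h0
      have h1 := congrFun h0 (Fin.last n)
      rw [Pi.smul_apply, Fin.snoc_last, smul_eq_mul, mul_one] at h1
      exact hc h1
    · intro f hf
      have hle : Ideal.span (Set.range (gens n d)) ≤
          RingHom.ker (eval (c • (Fin.snoc a 1 : Fin (n+1) → ℂ))) := by
        rw [Ideal.span_le]
        rintro q ⟨i, rfl⟩
        show eval _ (gens n d i) = 0
        unfold gens
        rw [map_prod]
        obtain ⟨j, hj1, hjd, hij⟩ := ha i
        refine Finset.prod_eq_zero (Finset.mem_range.mpr (show j - 1 < d by omega)) ?_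
        simp only [map_sub, map_mul, eval_X, eval_C, Pi.smul_apply, Fin.snoc_castSucc,
          Fin.snoc_last, smul_eq_mul]
        rw [hij]
        have hcast : ((j - 1 : ℕ) : ℂ) + 1 = (j : ℂ) := by
          rw [Nat.cast_sub hj1]
          push_cast
          ring
        rw [hcast]
        ring
      exact hle hf

/-- **A reduced complete intersection of split hypersurfaces.** The ideal
`I = (∏_{i=1}^d (x₀ - i xₙ), …, ∏_{i=1}^d (x_{n-1} - i xₙ))` in `ℂ[x₀,…,xₙ]` defines a
zero-dimensional subscheme of `ℙⁿ` whose support (points of the affine cone minus the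
origin, up to scaling) is exactly the set of `dⁿ` points `(a₀ : ⋯ : a_{n-1} : 1)` with
each `aᵢ ∈ {1,…,d}`, and this subscheme is reduced (the ideal is radical). -/
theorem stmt_18 (n d : ℕ) (hn : 1 ≤ n) (hd : 1 ≤ d) :
    {v : Fin (n + 1) → ℂ | v ≠ 0 ∧ ∀ f ∈ Ideal.span (Set.range fun i : Fin n =>
        ∏ j ∈ Finset.range d,
          ((X i.castSucc : MvPolynomial (Fin (n + 1)) ℂ) -
            C ((j : ℂ) + 1) * X (Fin.last n))), eval v f = 0} =
      {v : Fin (n + 1) → ℂ | ∃ (c : ℂ) (a : Fin n → ℂ), c ≠ 0 ∧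
        (∀ i, ∃ j : ℕ, 1 ≤ j ∧ j ≤ d ∧ a i = j) ∧ v = c • (Fin.snoc a 1 : Fin (n + 1) → ℂ)} ∧
    (Ideal.span (Set.range fun i : Fin n =>
        ∏ j ∈ Finset.range d,
          ((X i.castSucc : MvPolynomial (Fin (n + 1)) ℂ) -
            C ((j : ℂ) + 1) * X (Fin.last n)))).IsRadical := by
  exact ⟨set_part n d hn hd, radical_part n d hn hd⟩
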